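/- Let p ≥ 1 and j ≥ 1 be integers and let F_• be a complex of length p with j-th symmetric power complex S_j(F_•). Then the length λ(S_j F_•) equals jp if p is even, and equals j(p-1) + min(rank F_p, j) if p is odd. -/

import Mathlib

/-- The length of the symmetric power complex `S_j F_•` of a complex of free modules of
length `p ≥ 1` with ranks `r i ≥ 1`: it is the largest `t` such that the system
`∑ a_i = j`, `∑ i·a_i = t` has a solution with `(r i).choose (a i) ≠ 0` at odd positions
(i.e. `a i ≤ r i` for odd `i`). This equals `j·p` if `p` is even, and
`j·(p-1) + min (r p) j` if `p` is odd. -/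
private lemma aux1 (p j m : ℕ) (hp : 1 ≤ p) (hm : m ≤ j) :
    p * m + (p - 1) * (j - m) = j * (p - 1) + m := by
  obtain ⟨q, rfl⟩ : ∃ q, p = q + 1 := ⟨p - 1, by omega⟩
  obtain ⟨k, rfl⟩ : ∃ k, j = k + m := ⟨j - m, by omega⟩
  simp
  ring

private lemma aux2 (p j s b M : ℕ) (hp : 1 ≤ p) (hsb : s + b = j) (hbM : b ≤ M) :
    (p - 1) * s + p * b ≤ j * (p - 1) + M := by
  obtain ⟨q, rfl⟩ : ∃ q, p = q + 1 := ⟨p - 1, by omega⟩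
  subst hsb
  simp only [Nat.add_sub_cancel]
  nlinarith

theorem length_symmetric_power_complex (p j : ℕ) (hp : 1 ≤ p) (hj : 1 ≤ j)
    (r : Fin (p + 1) → ℕ) (hr : ∀ i, 1 ≤ r i) :
    IsGreatest {t : ℕ | ∃ a : Fin (p + 1) → ℕ,
        (∑ i, a i) = j ∧ (∀ i : Fin (p + 1), Odd (i : ℕ) → a i ≤ r i) ∧
          (∑ i : Fin (p + 1), (i : ℕ) * a i) = t}
      (if Even p then j * p else j * (p - 1) + min (r (Fin.last p)) j) := by
  constructor
  · -- membership
    split_ifs with hpe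
    · refine ⟨fun i => if i = Fin.last p then j else 0, ?_, ?_, ?_⟩
      · simp
      · intro i hi
        rcases eq_or_ne i (Fin.last p) with h | h
        · subst h
          rw [Fin.val_last] at hi
          exact absurd hpe (Nat.not_even_iff_odd.mpr hi)
        · simp [h]
      · simp [mul_ite, Finset.sum_ite_eq', mul_comm]
    · set m := min (r (Fin.last p)) j with hm
      have hmj : m ≤ j := min_le_right _ _
      have hlt : p - 1 < p + 1 := by omega
      have hne : (⟨p-1, hlt⟩ : Fin (p+1)) ≠ Fin.last p := by
        simp [Fin.ext_iff, Fin.last]; omega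
      refine ⟨fun i => (if i = Fin.last p then m else 0)
          + (if i = (⟨p-1, hlt⟩ : Fin (p+1)) then j - m else 0), ?_, ?_, ?_⟩
      · rw [Finset.sum_add_distrib]
        simp [Finset.sum_ite_eq']
        omega
      · intro i hi
        rcases eq_or_ne i (Fin.last p) with h | h
        · subst h
          simp [Ne.symm hne]
          exact min_le_left _ _
        · rcases eq_or_ne i (⟨p-1, hlt⟩ : Fin (p+1)) with h2 | h2
          · subst h2
            exfalso
            have hpo : Odd p := Nat.not_even_iff_odd.mp hpe
            obtain ⟨k, hk⟩ := hpo
            obtain ⟨l, hl⟩ := hi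
            simp only [] at hl
            omega
          · simp [h, h2]
      · have key : ∀ i : Fin (p+1), (i:ℕ) * ((if i = Fin.last p then m else 0)
            + (if i = (⟨p-1, hlt⟩ : Fin (p+1)) then j - m else 0))
            = (if i = Fin.last p then (Fin.last p : ℕ) * m else 0)
            + (if i = (⟨p-1, hlt⟩ : Fin (p+1)) then (p-1) * (j - m) else 0) := by
          intro i
          split_ifs with h h2 h2 <;> simp_all <;> ring_nf <;> omega
        rw [Finset.sum_congr rfl fun i _ => key i, Finset.sum_add_distrib]
        simp [Finset.sum_ite_eq']
        exact aux1 p j m hp hmj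
  · -- upper bound
    rintro t ⟨a, hsum, hodd, hts⟩
    subst hts
    split_ifs with hpe
    · calc ∑ i : Fin (p+1), (i:ℕ) * a i ≤ ∑ i : Fin (p+1), p * a i :=
            Finset.sum_le_sum fun i _ => Nat.mul_le_mul_right _ (Fin.is_le i)
        _ = p * j := by rw [← Finset.mul_sum, hsum]
        _ = j * p := mul_comm _ _
    · have hpodd : Odd p := Nat.not_even_iff_odd.mp hpe
      have hap_r : a (Fin.last p) ≤ r (Fin.last p) := hodd _ (by simpa using hpodd)
      have hap_j : a (Fin.last p) ≤ j := by
        rw [← hsum]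
        exact Finset.single_le_sum (fun i _ => Nat.zero_le _) (Finset.mem_univ _)
      rw [Fin.sum_univ_castSucc] at hsum ⊢
      have hb : ∑ i : Fin p, ((i.castSucc : Fin (p+1)) : ℕ) * a i.castSucc
          ≤ (p - 1) * ∑ i : Fin p, a i.castSucc := by
        rw [Finset.mul_sum]
        refine Finset.sum_le_sum fun i _ => Nat.mul_le_mul_right _ ?_
        have : (i : ℕ) < p := i.isLt
        simp only [Fin.coe_castSucc]
        omega
      have hlast : ((Fin.last p : Fin (p+1)) : ℕ) = p := rfl
      set s := ∑ i : Fin p, a i.castSucc with hs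
      set b := a (Fin.last p) with hbdef
      have hsb : s + b = j := hsum
      have hbm : b ≤ min (r (Fin.last p)) j := le_min hap_r hap_j
      calc (∑ i : Fin p, ((i.castSucc : Fin (p+1)) : ℕ) * a i.castSucc)
            + ((Fin.last p : Fin (p+1)) : ℕ) * b
          ≤ (p-1) * s + p * b := by rw [hlast]; exact Nat.add_le_add_right hb _
        _ ≤ j * (p-1) + min (r (Fin.last p)) j := aux2 p j s b _ hp hsb hbm
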